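/- Faithfulness of the maximum causal effect: for a quantum channel N from a d_A-dimensional system A to a d_B-dimensional system B, one has CE_max(N) = 0 if and only if N is a discard-and-reprepare channel, i.e., if and only if there exists a density matrix σ₀ on B such that N(X) = Tr[X]·σ₀ for every d_A×d_A complex matrix X. -/

import Mathlib

open Matrix ComplexOrder

/-- Trace norm of a square complex matrix. -/
noncomputable def traceNorm {n : Type*} [Fintype n] [DecidableEq n]
    (X : Matrix n n ℂ) : ℝ :=
  (((Matrix.posSemidef_conjTranspose_mul_self X).1.eigenvectorUnitary.1 *
      diagonal (((↑) : ℝ → ℂ) ∘ (Real.sqrt ·) ∘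
        (Matrix.posSemidef_conjTranspose_mul_self X).1.eigenvalues) *
      (star (Matrix.posSemidef_conjTranspose_mul_self X).1.eigenvectorUnitary :
        Matrix n n ℂ)).trace).re

/-- A density matrix: positive semidefinite with unit trace. -/
def IsDensityMatrix {n : Type*} [Fintype n] [DecidableEq n] (ρ : Matrix n n ℂ) : Prop :=
  ρ.PosSemidef ∧ ρ.trace = 1

/-- A quantum channel: a linear map admitting a Kraus representation. -/
def IsQuantumChannel {dA dB : ℕ}
    (N : Matrix (Fin dA) (Fin dA) ℂ →ₗ[ℂ] Matrix (Fin dB) (Fin dB) ℂ) : Prop :=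
  ∃ (k : ℕ) (K : Fin k → Matrix (Fin dB) (Fin dA) ℂ),
    (∀ X, N X = ∑ i, K i * X * (K i)ᴴ) ∧ (∑ i, (K i)ᴴ * K i = 1)

/-- Maximum causal effect. -/
noncomputable def CEmax {dA dB : ℕ}
    (N : Matrix (Fin dA) (Fin dA) ℂ →ₗ[ℂ] Matrix (Fin dB) (Fin dB) ℂ) : ℝ :=
  sSup {x : ℝ | ∃ ρ ρ' : Matrix (Fin dA) (Fin dA) ℂ,
    IsDensityMatrix ρ ∧ IsDensityMatrix ρ' ∧ ρ ≠ ρ' ∧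
    x = traceNorm (N ρ - N ρ') / traceNorm (ρ - ρ')}

/-- Minimum causal effect. -/
noncomputable def CEmin {dA dB : ℕ}
    (N : Matrix (Fin dA) (Fin dA) ℂ →ₗ[ℂ] Matrix (Fin dB) (Fin dB) ℂ) : ℝ :=
  sInf {x : ℝ | ∃ ρ ρ' : Matrix (Fin dA) (Fin dA) ℂ,
    IsDensityMatrix ρ ∧ IsDensityMatrix ρ' ∧ ρ ≠ ρ' ∧
    x = traceNorm (N ρ - N ρ') / traceNorm (ρ - ρ')}

/-- Minimum distinguishability preservation. -/
noncomputable def DPmin {dA dB : ℕ}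
    (N : Matrix (Fin dA) (Fin dA) ℂ →ₗ[ℂ] Matrix (Fin dB) (Fin dB) ℂ) : ℝ :=
  sInf {x : ℝ | ∃ p : ℝ, 0 ≤ p ∧ p ≤ 1 ∧
    ∃ ρ ρ' : Matrix (Fin dA) (Fin dA) ℂ,
      IsDensityMatrix ρ ∧ IsDensityMatrix ρ' ∧ ρ ≠ ρ' ∧
      x = traceNorm ((p : ℂ) • N ρ - ((1 - p : ℝ) : ℂ) • N ρ') /
          traceNorm ((p : ℂ) • ρ - ((1 - p : ℝ) : ℂ) • ρ')}

section AuxLemmas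

open Matrix ComplexOrder

lemma psd_smul' {n : Type*} [Fintype n] [DecidableEq n] {A : Matrix n n ℂ} (hA : A.PosSemidef)
    {c : ℝ} (hc : 0 ≤ c) : ((c : ℂ) • A).PosSemidef := by
  constructor
  · unfold Matrix.IsHermitian
    rw [conjTranspose_smul, hA.1.eq]
    norm_num
  · exact (hA.smul (Complex.zero_le_real.2 hc)).2

lemma psd_sum' {n k : Type*} [Fintype n] [Fintype k] [DecidableEq n] (f : k → Matrix n n ℂ)
    (h : ∀ i, (f i).PosSemidef) : (∑ i, f i).PosSemidef := by
  classical
  exact Finset.sum_induction f _ (fun a b ha hb => ha.add hb) Matrix.PosSemidef.zero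
    (fun i _ => h i)

lemma herm_trace_eq {n : Type*} [Fintype n] [DecidableEq n] {A : Matrix n n ℂ}
    (hA : A.IsHermitian) : A.trace = ((∑ i, hA.eigenvalues i : ℝ) : ℂ) := by
  conv_lhs => rw [hA.spectral_theorem]
  rw [Unitary.conjStarAlgAut_apply, Matrix.trace_mul_cycle, Matrix.mem_unitaryGroup_iff'.mp (hA.eigenvectorUnitary).2, one_mul,
    Matrix.trace_diagonal]
  push_cast
  rfl

lemma psd_trace_zero {n : Type*} [Fintype n] [DecidableEq n] {A : Matrix n n ℂ}
    (hA : A.PosSemidef) (h : A.trace = 0) : A = 0 := by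
  rw [herm_trace_eq hA.1] at h
  have h2 : ∑ i, hA.1.eigenvalues i = 0 := by exact_mod_cast h
  have h3 : ∀ i ∈ Finset.univ, hA.1.eigenvalues i = 0 :=
    (Finset.sum_eq_zero_iff_of_nonneg (fun i _ => hA.eigenvalues_nonneg i)).1 h2
  have h4 : diagonal (RCLike.ofReal ∘ hA.1.eigenvalues) = (0 : Matrix n n ℂ) := by
    ext i j
    by_cases hij : i = j <;> simp [Matrix.diagonal, hij, h3]
  conv_lhs => rw [hA.1.spectral_theorem]
  rw [h4]
  simp

lemma herm_add_smul_one_psd {n : Type*} [Fintype n] [DecidableEq n] {A : Matrix n n ℂ}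
    (hA : A.IsHermitian) :
    ∃ c : ℝ, 0 ≤ c ∧ (A + (c : ℂ) • 1).PosSemidef := by
  set c : ℝ := ∑ i, |hA.eigenvalues i| with hc
  refine ⟨c, Finset.sum_nonneg fun i _ => abs_nonneg _, ?_⟩
  set W : Matrix n n ℂ := (hA.eigenvectorUnitary : Matrix n n ℂ) with hW
  have hWW : W * star W = 1 := Matrix.mem_unitaryGroup_iff.mp (hA.eigenvectorUnitary).2
  have key : A + (c : ℂ) • 1
      = W * diagonal (fun i => ((hA.eigenvalues i + c : ℝ) : ℂ)) * Wᴴ := by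
    have hd : diagonal (fun i => ((hA.eigenvalues i + c : ℝ) : ℂ))
        = diagonal (RCLike.ofReal ∘ hA.eigenvalues) + (c : ℂ) • 1 := by
      ext i j
      by_cases hij : i = j <;> simp [Matrix.diagonal_apply, hij, Matrix.one_apply]
    rw [hd, Matrix.mul_add, Matrix.add_mul]
    have hspec : W * diagonal (RCLike.ofReal ∘ hA.eigenvalues) * star W = A := by
      rw [hW, ← Unitary.conjStarAlgAut_apply (S := ℂ), ← hA.spectral_theorem]
    rw [show Wᴴ = star W from rfl, hspec]
    congr 1
    rw [Matrix.mul_smul, Matrix.smul_mul, Matrix.mul_one, hWW]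
  rw [key]
  refine Matrix.PosSemidef.mul_mul_conjTranspose_same ?_ W
  refine Matrix.posSemidef_diagonal_iff.mpr fun i => Complex.zero_le_real.2 ?_
  have : |hA.eigenvalues i| ≤ c :=
    Finset.single_le_sum (f := fun i => |hA.eigenvalues i|) (fun i _ => abs_nonneg _)
      (Finset.mem_univ i)
  linarith [neg_abs_le (hA.eigenvalues i)]

section TN
attribute [local instance] Matrix.frobeniusSeminormedAddCommGroup
  Matrix.frobeniusNormedAddCommGroup Matrix.frobeniusNormedSpace

variable {n : Type*} [Fintype n] [DecidableEq n]

lemma traceNorm_eq_sum_sqrt (X : Matrix n n ℂ) :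
    traceNorm X
      = ∑ i, Real.sqrt ((Matrix.posSemidef_conjTranspose_mul_self X).1.eigenvalues i) := by
  unfold traceNorm
  set hA := Matrix.posSemidef_conjTranspose_mul_self X
  have : (hA.1.eigenvectorUnitary.1 * diagonal (((↑) : ℝ → ℂ) ∘ (Real.sqrt ·) ∘
      hA.1.eigenvalues) * (star hA.1.eigenvectorUnitary : Matrix n n ℂ)).trace
      = ((∑ i, Real.sqrt (hA.1.eigenvalues i) : ℝ) : ℂ) := by
    rw [Matrix.trace_mul_cycle,
      Matrix.mem_unitaryGroup_iff'.mp (hA.1.eigenvectorUnitary).2, one_mul,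
      Matrix.trace_diagonal]
    push_cast; rfl
  rw [this, Complex.ofReal_re]

lemma traceNorm_nonneg' (X : Matrix n n ℂ) : 0 ≤ traceNorm X := by
  rw [traceNorm_eq_sum_sqrt]
  exact Finset.sum_nonneg fun i _ => Real.sqrt_nonneg _

lemma frobenius_sq (X : Matrix n n ℂ) :
    ‖X‖ ^ 2 = ∑ i, (Matrix.posSemidef_conjTranspose_mul_self X).1.eigenvalues i := by
  set hA := Matrix.posSemidef_conjTranspose_mul_self X
  have htr : (Xᴴ * X).trace = ((∑ i, hA.1.eigenvalues i : ℝ) : ℂ) := herm_trace_eq hA.1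
  have htr2 : ((Xᴴ * X).trace).re = ∑ i, ∑ j, ‖X i j‖ ^ 2 := by
    rw [Matrix.trace, Complex.re_sum, Finset.sum_comm]
    refine Finset.sum_congr rfl fun i _ => ?_
    rw [Matrix.diag_apply, Matrix.mul_apply, Complex.re_sum]
    refine Finset.sum_congr rfl fun j _ => ?_
    rw [Matrix.conjTranspose_apply]
    simp [Complex.normSq_eq_norm_sq, Complex.normSq, Complex.sq_norm]
  have h3 : ‖X‖ ^ 2 = ∑ i, ∑ j, ‖X i j‖ ^ 2 := by
    rw [Matrix.frobenius_norm_def, ← Real.rpow_natCast _ 2, ← Real.rpow_mul (by positivity)]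
    norm_num
  rw [h3, ← htr2, htr, Complex.ofReal_re]

lemma frobenius_le_traceNorm (X : Matrix n n ℂ) : ‖X‖ ≤ traceNorm X := by
  set hA := Matrix.posSemidef_conjTranspose_mul_self X
  have key : ‖X‖ ^ 2 ≤ (traceNorm X) ^ 2 := by
    rw [frobenius_sq, traceNorm_eq_sum_sqrt]
    calc ∑ i, hA.1.eigenvalues i
        = ∑ i, Real.sqrt (hA.1.eigenvalues i) * Real.sqrt (hA.1.eigenvalues i) := by
          refine Finset.sum_congr rfl fun i _ => ?_
          rw [Real.mul_self_sqrt (hA.eigenvalues_nonneg i)]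
      _ ≤ ∑ i, Real.sqrt (hA.1.eigenvalues i) * (∑ j, Real.sqrt (hA.1.eigenvalues j)) := by
          refine Finset.sum_le_sum fun i _ => ?_
          refine mul_le_mul_of_nonneg_left ?_ (Real.sqrt_nonneg _)
          exact Finset.single_le_sum (fun j _ => Real.sqrt_nonneg _) (Finset.mem_univ i)
      _ = (∑ i, Real.sqrt (hA.1.eigenvalues i)) ^ 2 := by rw [← Finset.sum_mul]; ring
  have := Real.sqrt_le_sqrt key
  rwa [Real.sqrt_sq (norm_nonneg X), Real.sqrt_sq (traceNorm_nonneg' X)] at this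

lemma traceNorm_le_sqrt_card (X : Matrix n n ℂ) :
    traceNorm X ≤ Real.sqrt (Fintype.card n) * ‖X‖ := by
  set hA := Matrix.posSemidef_conjTranspose_mul_self X
  have key : (traceNorm X) ^ 2 ≤ (Fintype.card n : ℝ) * ‖X‖ ^ 2 := by
    rw [frobenius_sq, traceNorm_eq_sum_sqrt]
    have := sq_sum_le_card_mul_sum_sq (s := (Finset.univ : Finset n))
      (f := fun i => Real.sqrt (hA.1.eigenvalues i))
    simp only [Finset.card_univ] at this
    refine this.trans_eq ?_
    congr 1
    exact Finset.sum_congr rfl fun i _ => Real.sq_sqrt (hA.eigenvalues_nonneg i)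
  have h1 : 0 ≤ Real.sqrt (Fintype.card n) * ‖X‖ := by positivity
  nlinarith [traceNorm_nonneg' X,
    Real.sq_sqrt (Nat.cast_nonneg (Fintype.card n) : (0:ℝ) ≤ Fintype.card n),
    Real.sqrt_nonneg (Fintype.card n : ℝ), norm_nonneg X]

lemma traceNorm_eq_zero_iff' (X : Matrix n n ℂ) : traceNorm X = 0 ↔ X = 0 := by
  constructor
  · intro h
    have h1 := frobenius_le_traceNorm X
    rw [h] at h1
    exact norm_eq_zero.mp (le_antisymm h1 (norm_nonneg X))
  · rintro rfl
    have h1 : 0 ≤ traceNorm (0 : Matrix n n ℂ) := traceNorm_nonneg' 0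
    have h2 := traceNorm_le_sqrt_card (0 : Matrix n n ℂ)
    rw [norm_zero, mul_zero] at h2
    linarith

end TN

section Bound
attribute [local instance] Matrix.frobeniusSeminormedAddCommGroup
  Matrix.frobeniusNormedAddCommGroup Matrix.frobeniusNormedSpace

lemma exists_traceNorm_bound {dA dB : ℕ}
    (N : Matrix (Fin dA) (Fin dA) ℂ →ₗ[ℂ] Matrix (Fin dB) (Fin dB) ℂ) :
    ∃ C : ℝ, 0 ≤ C ∧ ∀ X, traceNorm (N X) ≤ C * traceNorm X := by
  letI : TopologicalSpace (Matrix (Fin dA) (Fin dA) ℂ) :=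
    (Matrix.frobeniusSeminormedAddCommGroup).toPseudoMetricSpace.toUniformSpace.toTopologicalSpace
  letI : TopologicalSpace (Matrix (Fin dB) (Fin dB) ℂ) :=
    (Matrix.frobeniusSeminormedAddCommGroup).toPseudoMetricSpace.toUniformSpace.toTopologicalSpace
  let cl := LinearMap.toContinuousLinearMap N
  refine ⟨Real.sqrt dB * ‖cl‖, by positivity, fun X => ?_⟩
  calc traceNorm (N X) ≤ Real.sqrt (Fintype.card (Fin dB)) * ‖N X‖ := traceNorm_le_sqrt_card _
    _ = Real.sqrt dB * ‖cl X‖ := by rw [Fintype.card_fin]; rfl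
    _ ≤ Real.sqrt dB * (‖cl‖ * ‖X‖) :=
        mul_le_mul_of_nonneg_left (cl.le_opNorm X) (Real.sqrt_nonneg _)
    _ ≤ Real.sqrt dB * (‖cl‖ * traceNorm X) := by
        refine mul_le_mul_of_nonneg_left ?_ (Real.sqrt_nonneg _)
        exact mul_le_mul_of_nonneg_left (frobenius_le_traceNorm X) (norm_nonneg cl)
    _ = Real.sqrt dB * ‖cl‖ * traceNorm X := by ring
end Bound

lemma channel_trace {dA dB : ℕ}
    {N : Matrix (Fin dA) (Fin dA) ℂ →ₗ[ℂ] Matrix (Fin dB) (Fin dB) ℂ}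
    (hN : IsQuantumChannel N) : ∀ X, (N X).trace = X.trace := by
  obtain ⟨k, K, hK, hsum⟩ := hN
  intro X
  rw [hK X, Matrix.trace_sum]
  calc ∑ i, (K i * X * (K i)ᴴ).trace
      = ∑ i, ((K i)ᴴ * K i * X).trace := by
        refine Finset.sum_congr rfl fun i _ => ?_
        rw [Matrix.trace_mul_cycle]
    _ = ((∑ i, (K i)ᴴ * K i) * X).trace := by rw [Finset.sum_mul, Matrix.trace_sum]
    _ = X.trace := by rw [hsum, one_mul]

lemma channel_psd {dA dB : ℕ}
    {N : Matrix (Fin dA) (Fin dA) ℂ →ₗ[ℂ] Matrix (Fin dB) (Fin dB) ℂ}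
    (hN : IsQuantumChannel N) : ∀ X, X.PosSemidef → (N X).PosSemidef := by
  obtain ⟨k, K, hK, hsum⟩ := hN
  intro X hX
  rw [hK X]
  exact psd_sum' _ fun i => hX.mul_mul_conjTranspose_same (K i)

end AuxLemmas

/-- **Faithfulness of the maximum causal effect.**
For a quantum channel `N` from a `dA`-dimensional system (`dA > 0`) to a `dB`-dimensional
system, `CEmax N = 0` if and only if `N` is a discard-and-reprepare channel, i.e. there is a
density matrix `σ₀` on `B` with `N X = Tr[X] • σ₀` for every matrix `X`. -/
theorem CEmax_eq_zero_iff_discard_and_reprepare {dA dB : ℕ} (hdA : 0 < dA)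
    (N : Matrix (Fin dA) (Fin dA) ℂ →ₗ[ℂ] Matrix (Fin dB) (Fin dB) ℂ)
    (hN : IsQuantumChannel N) :
    CEmax N = 0 ↔
      ∃ σ₀ : Matrix (Fin dB) (Fin dB) ℂ, IsDensityMatrix σ₀ ∧
        ∀ X : Matrix (Fin dA) (Fin dA) ℂ, N X = X.trace • σ₀ := by
  have hTr := channel_trace hN
  have hPSD := channel_psd hN
  constructor
  · intro hCE
    have hdA' : (dA : ℂ) ≠ 0 := Nat.cast_ne_zero.2 hdA.ne'
    -- the maximally mixed state
    set ρs : Matrix (Fin dA) (Fin dA) ℂ := (((dA : ℝ)⁻¹ : ℝ) : ℂ) • 1 with hρs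
    have hρsD : IsDensityMatrix ρs := by
      refine ⟨psd_smul' Matrix.PosSemidef.one (by positivity), ?_⟩
      rw [hρs, Matrix.trace_smul, Matrix.trace_one, Fintype.card_fin, smul_eq_mul]
      push_cast
      field_simp
    set σ₀ := N ρs with hσ₀
    have hσ₀D : IsDensityMatrix σ₀ := ⟨hPSD _ hρsD.1, by rw [hσ₀, hTr, hρsD.2]⟩
    refine ⟨σ₀, hσ₀D, ?_⟩
    obtain ⟨C, hC0, hC⟩ := exists_traceNorm_bound N
    unfold CEmax at hCE
    set S := {x : ℝ | ∃ ρ ρ' : Matrix (Fin dA) (Fin dA) ℂ,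
      IsDensityMatrix ρ ∧ IsDensityMatrix ρ' ∧ ρ ≠ ρ' ∧
      x = traceNorm (N ρ - N ρ') / traceNorm (ρ - ρ')} with hS
    have hBdd : BddAbove S := by
      refine ⟨C, fun x hx => ?_⟩
      obtain ⟨ρ, ρ', h1, h2, h3, rfl⟩ := hx
      have hne : ρ - ρ' ≠ 0 := sub_ne_zero.mpr h3
      have ht : 0 < traceNorm (ρ - ρ') :=
        lt_of_le_of_ne (traceNorm_nonneg' _) (Ne.symm fun h =>
          hne ((traceNorm_eq_zero_iff' _).1 h))
      rw [div_le_iff₀ ht]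
      calc traceNorm (N ρ - N ρ') = traceNorm (N (ρ - ρ')) := by rw [_root_.map_sub]
        _ ≤ C * traceNorm (ρ - ρ') := hC _
    have stepA : ∀ ρ, IsDensityMatrix ρ → N ρ = σ₀ := by
      intro ρ hρ
      by_cases hcase : ρ = ρs
      · rw [hcase]
      · set x := traceNorm (N ρ - N ρs) / traceNorm (ρ - ρs) with hx
        have hmem : x ∈ S := ⟨ρ, ρs, hρ, hρsD, hcase, rfl⟩
        have hx0 : 0 ≤ x := div_nonneg (traceNorm_nonneg' _) (traceNorm_nonneg' _)
        have hxle : x ≤ 0 := hCE ▸ le_csSup hBdd hmem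
        have hxz : x = 0 := le_antisymm hxle hx0
        have hne : ρ - ρs ≠ 0 := sub_ne_zero.mpr hcase
        have ht : traceNorm (ρ - ρs) ≠ 0 := fun h => hne ((traceNorm_eq_zero_iff' _).1 h)
        rw [hx, div_eq_zero_iff] at hxz
        rcases hxz with h | h
        · have := (traceNorm_eq_zero_iff' _).1 h
          rwa [sub_eq_zero] at this
        · exact absurd h ht
    have stepB : ∀ P : Matrix (Fin dA) (Fin dA) ℂ, P.PosSemidef → N P = P.trace • σ₀ := by
      intro P hP
      have htreq : P.trace = ((∑ i, hP.1.eigenvalues i : ℝ) : ℂ) := herm_trace_eq hP.1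
      set r : ℝ := ∑ i, hP.1.eigenvalues i with hr
      have hr0 : 0 ≤ r := Finset.sum_nonneg fun i _ => hP.eigenvalues_nonneg i
      rcases eq_or_lt_of_le hr0 with h0 | hpos
      · have hPz : P = 0 := psd_trace_zero hP (by rw [htreq, ← h0]; simp)
        rw [hPz]
        simp
      · set ρ : Matrix (Fin dA) (Fin dA) ℂ := ((r⁻¹ : ℝ) : ℂ) • P with hρdef
        have hρD : IsDensityMatrix ρ := by
          refine ⟨psd_smul' hP (by positivity), ?_⟩
          rw [hρdef, Matrix.trace_smul, htreq, smul_eq_mul]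
          push_cast
          field_simp
        have hNρ : N ρ = σ₀ := stepA ρ hρD
        rw [hρdef, _root_.map_smul] at hNρ
        have : ((r : ℝ) : ℂ) • (((r⁻¹ : ℝ) : ℂ) • N P) = ((r : ℝ) : ℂ) • σ₀ := by rw [hNρ]
        rw [smul_smul, ← Complex.ofReal_mul, mul_inv_cancel₀ hpos.ne', Complex.ofReal_one,
          one_smul] at this
        rw [this, htreq]
    have stepC : ∀ H : Matrix (Fin dA) (Fin dA) ℂ, H.IsHermitian → N H = H.trace • σ₀ := by
      intro H hH
      obtain ⟨c, hc0, hPSDc⟩ := herm_add_smul_one_psd hH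
      have hN1 : N 1 = Matrix.trace (1 : Matrix (Fin dA) (Fin dA) ℂ) • σ₀ :=
        stepB 1 Matrix.PosSemidef.one
      have h1 : N (H + (c : ℂ) • 1) = (H + (c : ℂ) • 1).trace • σ₀ := stepB _ hPSDc
      rw [_root_.map_add, N.map_smul, hN1, Matrix.trace_add, Matrix.trace_smul, add_smul,
        smul_smul, smul_eq_mul] at h1
      exact add_right_cancel h1
    intro X
    obtain ⟨H, hHdef⟩ : ∃ H, H = ((1 / 2 : ℂ)) • (X + Xᴴ) := ⟨_, rfl⟩
    obtain ⟨K, hKdef⟩ : ∃ K, K = (-(Complex.I) / 2) • (X - Xᴴ) := ⟨_, rfl⟩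
    have hH : H.IsHermitian := by
      unfold Matrix.IsHermitian
      rw [hHdef, conjTranspose_smul, conjTranspose_add, conjTranspose_conjTranspose]
      simp only [Complex.star_def, map_div₀, _root_.map_one, map_ofNat]
      rw [add_comm]
    have hK : K.IsHermitian := by
      unfold Matrix.IsHermitian
      rw [hKdef, conjTranspose_smul, conjTranspose_sub, conjTranspose_conjTranspose]
      simp only [Complex.star_def, map_div₀, map_neg, Complex.conj_I, map_ofNat]
      match_scalars <;> ring
    have hX : X = H + Complex.I • K := by
      rw [hHdef, hKdef]
      match_scalars <;> simp [Complex.I_mul_I] <;> ring_nf <;> simp [Complex.I_sq] <;> ring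
    calc N X = N H + Complex.I • N K := by rw [hX, _root_.map_add, N.map_smul]
      _ = H.trace • σ₀ + Complex.I • (K.trace • σ₀) := by rw [stepC H hH, stepC K hK]
      _ = (H.trace + Complex.I * K.trace) • σ₀ := by rw [add_smul, smul_smul]
      _ = X.trace • σ₀ := by
          congr 1
          rw [hX, Matrix.trace_add, Matrix.trace_smul, smul_eq_mul]
  · rintro ⟨σ₀, hσ₀D, hrep⟩
    unfold CEmax
    set S := {x : ℝ | ∃ ρ ρ' : Matrix (Fin dA) (Fin dA) ℂ,
      IsDensityMatrix ρ ∧ IsDensityMatrix ρ' ∧ ρ ≠ ρ' ∧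
      x = traceNorm (N ρ - N ρ') / traceNorm (ρ - ρ')} with hS
    have hsub : S ⊆ {0} := by
      rintro x ⟨ρ, ρ', h1, h2, h3, rfl⟩
      have hz : N ρ - N ρ' = 0 := by
        rw [hrep ρ, hrep ρ', h1.2, h2.2, sub_self]
      rw [hz, (traceNorm_eq_zero_iff' (0 : Matrix (Fin dB) (Fin dB) ℂ)).2 rfl, zero_div]
      rfl
    rcases Set.eq_empty_or_nonempty S with hemp | hne
    · rw [hemp, Real.sSup_empty]
    · obtain ⟨y, hy⟩ := hne
      have hy0 : y = 0 := hsub hy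
      have hSeq : S = {0} := Set.Subset.antisymm hsub
        (Set.singleton_subset_iff.2 (hy0 ▸ hy))
      rw [hSeq, csSup_singleton]
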